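/- arXiv:1906.09523 — 6 statements merged into one kernel-verified Lean document; each statement's English description precedes it below -/
import Mathlib

section
/- Let V be a finite-dimensional complex vector space, T a nilpotent operator on V, and x ∈ V nonzero. Define the gap sequence gs(x) = {k ∈ ℕ : T^{k+1}x ≠ 0 and v(T^{k+1}x) > v(T^k x) + 1} ∪ {ht(x) - 1}. Then the cardinality of gs(x) is at most dim(ker T). -/
open Polynomial

variable {V : Type*} [AddCommGroup V] [Module ℂ V]

/-- The value `v(x)`: the largest `n` with `x ∈ T^n(V)`. -/
noncomputable def val (T : V →ₗ[ℂ] V) (x : V) : ℕ :=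
  sSup {n : ℕ | x ∈ LinearMap.range (T ^ n)}

/-- The value `v_U(x)` computed in a subspace `U`: the largest `n` with `x ∈ T^n(U)`. -/
noncomputable def valU (T : V →ₗ[ℂ] V) (U : Submodule ℂ V) (x : V) : ℕ :=
  sSup {n : ℕ | x ∈ Submodule.map (T ^ n) U}

/-- The height `ht(x)`: the least `n` with `T^n x = 0`. -/
noncomputable def ht (T : V →ₗ[ℂ] V) (x : V) : ℕ :=
  sInf {n : ℕ | (T ^ n) x = 0}

/-- The gap sequence of `x`. -/
noncomputable def gs (T : V →ₗ[ℂ] V) (x : V) : Set ℕ :=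
  {k | (T ^ (k + 1)) x ≠ 0 ∧ val T ((T ^ (k + 1)) x) > val T ((T ^ k) x) + 1}
    ∪ {ht T x - 1}

/-- The value sequence of `x`. -/
noncomputable def vs (T : V →ₗ[ℂ] V) (x : V) : Set ℕ :=
  (fun k => val T ((T ^ k) x)) '' gs T x

/-- The value-preserving property of a family of vectors, relative to a subspace `U`
(taking `U = ⊤` gives the value-preserving property in `V`). -/
def VP {ι : Type*} (T : V →ₗ[ℂ] V) (U : Submodule ℂ V) (x : ι → V) : Prop :=
  ∀ (s : Finset ι) (α : ι → ℂ) (hs : s.Nonempty), (∀ j ∈ s, α j ≠ 0) →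
    valU T U (∑ j ∈ s, α j • x j) = s.inf' hs (fun j => valU T U (x j))

/-- The triple `(V, T, U)` is indecomposable. -/
def Indecomposable (T : V →ₗ[ℂ] V) (U : Submodule ℂ V) : Prop :=
  ∀ V₁ V₂ : Submodule ℂ V, (∀ x ∈ V₁, T x ∈ V₁) → (∀ x ∈ V₂, T x ∈ V₂) →
    IsCompl V₁ V₂ → U = (U ⊓ V₁) ⊔ (U ⊓ V₂) → V₁ = ⊥ ∨ V₂ = ⊥

/-- `y` is `T`-consistent. -/
def TConsistent (T : V →ₗ[ℂ] V) (y : V) : Prop :=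
  ∀ k < ht T y, val T ((T ^ k) y) = val T y + k

/-- The cyclic invariant subspace generated by `x`. -/
noncomputable def cyc (T : V →ₗ[ℂ] V) (x : V) : Submodule ℂ V :=
  Submodule.span ℂ (Set.range fun k : ℕ => (T ^ k) x)

/-- The span `V(Y)` of the orbits of a family `y`. -/
noncomputable def VY (T : V →ₗ[ℂ] V) {r : ℕ} (y : Fin r → V) : Submodule ℂ V :=
  Submodule.span ℂ (⋃ i, (fun k => (T ^ k) (y i)) '' Set.Iio (ht T (y i)))

lemma mem_range_pow_mono (T : V →ₗ[ℂ] V) {x : V} {m n : ℕ} (h : n ≤ m)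
    (hm : x ∈ LinearMap.range (T ^ m)) : x ∈ LinearMap.range (T ^ n) := by
  obtain ⟨u, hu⟩ := hm
  refine ⟨(T ^ (m - n)) u, ?_⟩
  rw [← Module.End.mul_apply, ← pow_add, show n + (m - n) = m by omega]
  exact hu

lemma val_spec (T : V →ₗ[ℂ] V) (hT : IsNilpotent T) {x : V} (hx : x ≠ 0) (n : ℕ) :
    x ∈ LinearMap.range (T ^ n) ↔ n ≤ val T x := by
  obtain ⟨N, hN⟩ := hT
  have hbdd : BddAbove {n : ℕ | x ∈ LinearMap.range (T ^ n)} := by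
    refine ⟨N, fun m hm => ?_⟩
    by_contra hc
    push_neg at hc
    obtain ⟨u, hu⟩ := hm
    apply hx
    rw [← hu, show m = N + (m - N) by omega, pow_add, hN]
    simp
  have hne : {n : ℕ | x ∈ LinearMap.range (T ^ n)}.Nonempty := ⟨0, by simp⟩
  constructor
  · exact fun h => le_csSup hbdd h
  · intro hn
    exact mem_range_pow_mono T hn (Nat.sSup_mem hne hbdd)

lemma ht_spec (T : V →ₗ[ℂ] V) (hT : IsNilpotent T) (x : V) (k : ℕ) :
    (T ^ k) x = 0 ↔ ht T x ≤ k := by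
  obtain ⟨N, hN⟩ := hT
  have hne : {n : ℕ | (T ^ n) x = 0}.Nonempty := ⟨N, by simp [hN]⟩
  constructor
  · exact fun h => Nat.sInf_le h
  · intro hk
    have h0 : (T ^ ht T x) x = 0 := Nat.sInf_mem hne
    rw [show k = (k - ht T x) + ht T x by omega, pow_add, Module.End.mul_apply, h0]
    simp

lemma li_of_val (T : V →ₗ[ℂ] V) (hT : IsNilpotent T) {ι : Type*} (z : ι → V)
    (hz : ∀ i, z i ≠ 0) (hinj : Function.Injective fun i => val T (z i)) :
    LinearIndependent ℂ z := by
  classical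
  rw [linearIndependent_iff']
  intro s g hsum i hi
  by_contra hgi
  set t := s.filter (fun j => g j ≠ 0) with htdef
  have htne : t.Nonempty := ⟨i, Finset.mem_filter.2 ⟨hi, hgi⟩⟩
  obtain ⟨i0, hi0t, hmin⟩ := t.exists_min_image (fun j => val T (z j)) htne
  have hsum' : ∑ j ∈ t, g j • z j = 0 := by
    rw [← hsum]
    apply Finset.sum_subset (Finset.filter_subset _ _)
    intro j hjs hjt
    have : g j = 0 := by
      by_contra hc
      exact hjt (Finset.mem_filter.2 ⟨hjs, hc⟩)
    rw [this, zero_smul]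
  have h2 : g i0 • z i0 = -∑ j ∈ t.erase i0, g j • z j := by
    have := Finset.add_sum_erase t (fun j => g j • z j) hi0t
    rw [hsum'] at this
    linear_combination (norm := module) this
  have hmem : g i0 • z i0 ∈ LinearMap.range (T ^ (val T (z i0) + 1)) := by
    rw [h2]
    refine neg_mem (Submodule.sum_mem _ fun j hj => ?_)
    have hjt : j ∈ t := Finset.mem_of_mem_erase hj
    have hne : j ≠ i0 := Finset.ne_of_mem_erase hj
    have hlt : val T (z i0) < val T (z j) :=
      lt_of_le_of_ne (hmin j hjt) (fun h => hne (hinj h.symm))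
    exact Submodule.smul_mem _ _ ((val_spec T hT (hz j) _).2 hlt)
  have gne : g i0 ≠ 0 := (Finset.mem_filter.1 hi0t).2
  have hzmem : z i0 ∈ LinearMap.range (T ^ (val T (z i0) + 1)) := by
    have := Submodule.smul_mem _ (g i0)⁻¹ hmem
    rwa [smul_smul, inv_mul_cancel₀ gne, one_smul] at this
  have := (val_spec T hT (hz i0) _).1 hzmem
  omega

theorem stmt3 [FiniteDimensional ℂ V] (T : V →ₗ[ℂ] V) (hT : IsNilpotent T)
    (x : V) (hx : x ≠ 0) :
    (gs T x).ncard ≤ Module.finrank ℂ (LinearMap.ker T) := by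
  classical
  set h := ht T x with hh
  have hlt : ∀ k, (T ^ k) x ≠ 0 ↔ k < h := by
    intro k
    rw [← not_le, ← ht_spec T hT x k]
  have hpos : 1 ≤ h := by
    have := (hlt 0).1 (by simpa using hx)
    omega
  have hsub : gs T x ⊆ Set.Iio h := by
    intro k hk
    rcases hk with hk | hk
    · have := (hlt (k + 1)).1 hk.1
      simp only [Set.mem_Iio]; omega
    · simp only [Set.mem_singleton_iff] at hk
      simp only [Set.mem_Iio]; omega
  have hstep : ∀ k, (T ^ (k + 1)) x ≠ 0 →
      val T ((T ^ k) x) + 1 ≤ val T ((T ^ (k + 1)) x) := by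
    intro k hk1
    have hk0 : (T ^ k) x ≠ 0 := by
      intro h0
      apply hk1
      rw [pow_succ', Module.End.mul_apply, h0, map_zero]
    obtain ⟨u, hu⟩ := (val_spec T hT hk0 (val T ((T ^ k) x))).2 le_rfl
    refine (val_spec T hT hk1 _).1 ⟨u, ?_⟩
    rw [pow_succ', Module.End.mul_apply, hu, ← Module.End.mul_apply, ← pow_succ']
  have hmono : ∀ m, m < h → ∀ k, k < m → val T ((T ^ k) x) < val T ((T ^ m) x) := by
    intro m
    induction m with
    | zero => intro _ k hk; omega
    | succ m ih =>
      intro hm k hk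
      have h1 : (T ^ (m + 1)) x ≠ 0 := (hlt _).2 hm
      have hs := hstep m h1
      rcases Nat.lt_succ_iff_lt_or_eq.1 hk with hkm | rfl
      · have := ih (by omega) k hkm
        omega
      · omega
  have hker : ∀ k ∈ gs T x, ∃ z : V, z ∈ LinearMap.ker T ∧ z ≠ 0 ∧
      val T z = val T ((T ^ k) x) := by
    intro k hk
    rcases hk with hk | hk
    · obtain ⟨hk1, hk2⟩ := hk
      set n := val T ((T ^ k) x) with hn
      have hk0 : (T ^ k) x ≠ 0 := by
        intro h0
        apply hk1
        rw [pow_succ', Module.End.mul_apply, h0, map_zero]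
      obtain ⟨u, hu⟩ := (val_spec T hT hk1 (n + 2)).2 (by omega)
      have hnot : (T ^ k) x ∉ LinearMap.range (T ^ (n + 1)) := by
        intro hmem
        have := (val_spec T hT hk0 (n + 1)).1 hmem
        omega
      refine ⟨(T ^ k) x - (T ^ (n + 1)) u, ?_, ?_, ?_⟩
      · rw [LinearMap.mem_ker, map_sub]
        have e1 : T ((T ^ k) x) = (T ^ (k + 1)) x := by
          rw [pow_succ', Module.End.mul_apply]
        have e2 : T ((T ^ (n + 1)) u) = (T ^ (n + 2)) u := by
          have e3 : (T ^ (n + 2)) = T * T ^ (n + 1) := by rw [← pow_succ']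
          rw [e3]; rfl
        rw [e1, e2, hu, sub_self]
      · intro h0
        apply hnot
        rw [sub_eq_zero] at h0
        exact ⟨u, h0.symm⟩
      · have hzne : (T ^ k) x - (T ^ (n + 1)) u ≠ 0 := by
          intro h0
          apply hnot
          rw [sub_eq_zero] at h0
          exact ⟨u, h0.symm⟩
        have hmem : (T ^ k) x - (T ^ (n + 1)) u ∈ LinearMap.range (T ^ n) := by
          refine sub_mem ((val_spec T hT hk0 n).2 le_rfl) ?_
          exact ⟨T u, by rw [← Module.End.mul_apply, ← pow_succ]⟩
        have hle : n ≤ val T ((T ^ k) x - (T ^ (n + 1)) u) :=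
          (val_spec T hT hzne n).1 hmem
        have hge : ¬ (n + 1 ≤ val T ((T ^ k) x - (T ^ (n + 1)) u)) := by
          intro hc
          have hmem2 := (val_spec T hT hzne (n + 1)).2 hc
          apply hnot
          have : (T ^ k) x = ((T ^ k) x - (T ^ (n + 1)) u) + (T ^ (n + 1)) u := by abel
          rw [this]
          exact add_mem hmem2 ⟨u, rfl⟩
        omega
    · simp only [Set.mem_singleton_iff] at hk
      subst hk
      refine ⟨(T ^ (h - 1)) x, ?_, (hlt _).2 (by omega), rfl⟩
      rw [LinearMap.mem_ker]
      have e4 : T ((T ^ (h - 1)) x) = (T ^ (h - 1 + 1)) x := by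
        rw [pow_succ', Module.End.mul_apply]
      rw [e4, show h - 1 + 1 = h by omega]
      exact (ht_spec T hT x h).2 le_rfl
  choose z hzker hzne hzval using fun k : gs T x => hker k k.2
  have hvinj : Function.Injective fun i : gs T x => val T (z i) := by
    intro i j hij
    simp only [hzval] at hij
    have hi : (i : ℕ) < h := hsub i.2
    have hj : (j : ℕ) < h := hsub j.2
    rcases lt_trichotomy (i : ℕ) (j : ℕ) with hc | hc | hc
    · have := hmono j hj i hc; omega
    · exact Subtype.ext hc
    · have := hmono i hi j hc; omega
  have hli : LinearIndependent ℂ z := li_of_val T hT z hzne hvinj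
  let w : gs T x → LinearMap.ker T := fun i => ⟨z i, hzker i⟩
  have hw : LinearIndependent ℂ w := by
    apply LinearIndependent.of_comp (LinearMap.ker T).subtype
    exact hli
  have hfin : (gs T x).Finite := Set.Finite.subset (Set.finite_Iio h) hsub
  haveI := hfin.fintype
  have hcard := hw.fintype_card_le_finrank
  rwa [Set.ncard_eq_toFinset_card', Set.toFinset_card]
end

section
/- Let V be a complex vector space, T a linear operator on V, x ∈ V nonzero, and P(X) = Σ_{k ≥ k₀} a_k X^k a polynomial with a_{k₀} ≠ 0 and P(T)x ≠ 0. Then v(P(T)x) = v(T^{k₀} x), where v denotes the value function associated to a nilpotent T. -/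
open Polynomial

variable {V : Type*} [AddCommGroup V] [Module ℂ V]

lemma mem_range_of_commute {T u : V →ₗ[ℂ] V} (hc : Commute T u) {y : V} {n : ℕ}
    (h : y ∈ LinearMap.range (T ^ n)) : u y ∈ LinearMap.range (T ^ n) := by
  obtain ⟨z, hz⟩ := h
  refine ⟨u z, ?_⟩
  have := (hc.pow_left n).eq
  calc (T ^ n) (u z) = (T ^ n * u) z := rfl
    _ = (u * T ^ n) z := by rw [this]
    _ = u y := by rw [← hz]; rfl

lemma val_unit_apply {T u : V →ₗ[ℂ] V} (hu : IsUnit u) (hc : Commute T u) (y : V) :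
    val T (u y) = val T y := by
  obtain ⟨v, rfl⟩ := hu
  unfold val
  congr 1
  ext n
  simp only [Set.mem_setOf_eq]
  constructor
  · intro h
    have h2 := mem_range_of_commute (u := ((v⁻¹ : (V →ₗ[ℂ] V)ˣ) : V →ₗ[ℂ] V)) hc.units_inv_right h
    have : ((v⁻¹ : (V →ₗ[ℂ] V)ˣ) : V →ₗ[ℂ] V) ((v : V →ₗ[ℂ] V) y) = y := by
      rw [← Module.End.mul_apply, Units.inv_mul, Module.End.one_apply]
    rwa [this] at h2
  · exact mem_range_of_commute hc

theorem stmt5 [FiniteDimensional ℂ V] (T : V →ₗ[ℂ] V) (hT : IsNilpotent T)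
    (x : V) (hx : x ≠ 0) (P : Polynomial ℂ) (k₀ : ℕ)
    (hlow : ∀ k < k₀, P.coeff k = 0) (hk₀ : P.coeff k₀ ≠ 0)
    (hPx : (Polynomial.aeval T P) x ≠ 0) :
    val T ((Polynomial.aeval T P) x) = val T ((T ^ k₀) x) := by
  obtain ⟨Q, hQ⟩ := Polynomial.X_pow_dvd_iff.mpr hlow
  have hQ0 : Q.coeff 0 ≠ 0 := by
    have h : P.coeff k₀ = Q.coeff 0 := by
      rw [hQ]
      simpa using Polynomial.coeff_X_pow_mul Q k₀ 0
    rwa [h] at hk₀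
  have hcomm : ∀ R : Polynomial ℂ, Commute T (Polynomial.aeval T R) := by
    intro R
    have h1 : Polynomial.aeval T (Polynomial.X : Polynomial ℂ) = T := by simp
    have := (Commute.all (Polynomial.X : Polynomial ℂ) R).map (Polynomial.aeval T)
    rwa [h1] at this
  have hunit : IsUnit (Polynomial.aeval T Q) := by
    have hsplit : Polynomial.aeval T Q
        = T * Polynomial.aeval T Q.divX + algebraMap ℂ (V →ₗ[ℂ] V) (Q.coeff 0) := by
      conv_lhs => rw [← Polynomial.X_mul_divX_add Q]
      rw [map_add, map_mul, Polynomial.aeval_X, Polynomial.aeval_C]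
    rw [hsplit]
    refine IsNilpotent.isUnit_add_right_of_commute ?_ ?_ ?_
    · exact (hcomm Q.divX).isNilpotent_mul_right hT
    · exact (isUnit_iff_ne_zero.mpr hQ0).map (algebraMap ℂ (V →ₗ[ℂ] V))
    · exact Algebra.commute_algebraMap_right _ _
  have hx2 : (Polynomial.aeval T P) x = (Polynomial.aeval T Q) ((T ^ k₀) x) := by
    rw [hQ, map_mul]
    have h1 : Polynomial.aeval T (Polynomial.X ^ k₀ : Polynomial ℂ) = T ^ k₀ := by simp
    rw [h1, Module.End.mul_apply, ← Module.End.mul_apply, ((hcomm Q).pow_left k₀).eq,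
      Module.End.mul_apply]
  rw [hx2, val_unit_apply hunit (hcomm Q)]
end

section
/- Let V be a finite-dimensional complex vector space, T nilpotent on V, and x ∈ V nonzero. If P is a polynomial with P(0) ≠ 0, then x is T-consistent if and only if P(T)x is T-consistent, where a vector y is T-consistent if v(T^k y) = v(y) + k for all 0 ≤ k ≤ ht(y) - 1. -/
open Polynomial

variable {V : Type*} [AddCommGroup V] [Module ℂ V]

lemma range_pow_le (T : V →ₗ[ℂ] V) {m n : ℕ} (h : m ≤ n) :
    LinearMap.range (T ^ n) ≤ LinearMap.range (T ^ m) := by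
  obtain ⟨k, rfl⟩ := Nat.exists_eq_add_of_le h
  rw [pow_add, Module.End.mul_eq_comp]
  exact LinearMap.range_comp_le_range _ _

lemma bdd_val (T : V →ₗ[ℂ] V) (hT : IsNilpotent T) {z : V} (hz : z ≠ 0) :
    BddAbove {n : ℕ | z ∈ LinearMap.range (T ^ n)} := by
  obtain ⟨N, hN⟩ := hT
  refine ⟨N, fun n hn => ?_⟩
  by_contra h
  push_neg at h
  have := range_pow_le T h.le hn
  rw [hN, LinearMap.range_zero, Submodule.mem_bot] at this
  exact hz this

lemma mem_val_set (T : V →ₗ[ℂ] V) (z : V) : 0 ∈ {n : ℕ | z ∈ LinearMap.range (T ^ n)} := by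
  simp [pow_zero, Module.End.one_eq_id]

lemma val_mem (T : V →ₗ[ℂ] V) (hT : IsNilpotent T) {z : V} (hz : z ≠ 0) :
    z ∈ LinearMap.range (T ^ val T z) :=
  Nat.sSup_mem ⟨0, mem_val_set T z⟩ (bdd_val T hT hz)

lemma le_val (T : V →ₗ[ℂ] V) (hT : IsNilpotent T) {z : V} (hz : z ≠ 0) {n : ℕ}
    (h : z ∈ LinearMap.range (T ^ n)) : n ≤ val T z :=
  le_csSup (bdd_val T hT hz) h

lemma aeval_comm_pow (T : V →ₗ[ℂ] V) (Q : Polynomial ℂ) (n : ℕ) :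
    (aeval T Q) * (T ^ n) = (T ^ n) * (aeval T Q) := by
  have h1 : (T ^ n : V →ₗ[ℂ] V) = aeval T ((X : ℂ[X]) ^ n) := by simp
  rw [h1, ← map_mul, ← map_mul, mul_comm]

lemma aeval_mem_range (T : V →ₗ[ℂ] V) (Q : Polynomial ℂ) {n : ℕ} {z : V}
    (h : z ∈ LinearMap.range (T ^ n)) : (aeval T Q) z ∈ LinearMap.range (T ^ n) := by
  obtain ⟨u, rfl⟩ := h
  exact ⟨(aeval T Q) u, by
    rw [← Module.End.mul_apply, ← aeval_comm_pow, Module.End.mul_apply]⟩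

lemma exists_inv (T : V →ₗ[ℂ] V) (hT : IsNilpotent T) (P : ℂ[X]) (hP : P.eval 0 ≠ 0) :
    ∃ R : ℂ[X], R.eval 0 ≠ 0 ∧ (aeval T R) * (aeval T P) = 1 := by
  obtain ⟨N, hN⟩ := hT
  have hN' : T ^ (N + 1) = 0 := by rw [pow_succ, hN, zero_mul]
  set c := P.eval 0 with hc
  set S : ℂ[X] := 1 - C c⁻¹ * P with hS
  have hSe : S.eval 0 = 0 := by
    simp [hS, ← hc, inv_mul_cancel₀ hP]
  have hXdvd : (X : ℂ[X]) ∣ S := X_dvd_iff.mpr (by rwa [coeff_zero_eq_eval_zero])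
  refine ⟨C c⁻¹ * ∑ i ∈ Finset.range (N + 1), S ^ i, ?_, ?_⟩
  · simp only [eval_mul, eval_C, eval_finset_sum, eval_pow, hSe]
    rw [zero_geom_sum]; simp [hP]
  · have hcc : (C c⁻¹ * C c : ℂ[X]) = 1 := by
      rw [← C_mul, inv_mul_cancel₀ hP, C_1]
    have hCP : (C c) * (1 - S) = P := by
      rw [hS]
      ring_nf
      rw [mul_comm (C c) (C c⁻¹), hcc, one_mul]
    have h2 : (∑ i ∈ Finset.range (N + 1), S ^ i) * (1 - S) = 1 - S ^ (N + 1) := by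
      have h3 := geom_sum_mul S (N + 1)
      linear_combination -h3
    have key : (C c⁻¹ * ∑ i ∈ Finset.range (N + 1), S ^ i) * P = 1 - S ^ (N + 1) := by
      calc (C c⁻¹ * ∑ i ∈ Finset.range (N + 1), S ^ i) * P
          = (C c⁻¹ * C c) * ((∑ i ∈ Finset.range (N + 1), S ^ i) * (1 - S)) := by
            rw [← hCP]; ring
        _ = 1 - S ^ (N + 1) := by rw [hcc, one_mul, h2]
    have hSN : (aeval T) (S ^ (N + 1)) = 0 := by
      obtain ⟨g, hg⟩ := pow_dvd_pow_of_dvd hXdvd (N + 1)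
      rw [hg, map_mul, map_pow, aeval_X, hN', zero_mul]
    rw [← map_mul, key, map_sub, map_one, hSN, sub_zero]

lemma tcons_aeval (T : V →ₗ[ℂ] V) (hT : IsNilpotent T) (x : V) (hx : x ≠ 0)
    (P : ℂ[X]) (hP : P.eval 0 ≠ 0) (hc : TConsistent T x) :
    TConsistent T ((aeval T) P x) := by
  obtain ⟨N, hN⟩ := hT
  set c := P.eval 0 with hcdef
  set y := (aeval T) P x with hy
  set m := val T x with hm
  set h := ht T x with hh
  -- basic facts about heights
  have hhmem : (T ^ h) x = 0 := by
    have h1 : h ∈ {n : ℕ | (T ^ n) x = 0} := by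
      rw [hh, ht]
      exact Nat.sInf_mem ⟨N, show (T ^ N) x = 0 by rw [hN]; rfl⟩
    exact h1
  have hh0 : ∀ n, h ≤ n → (T ^ n) x = 0 := by
    intro n hn
    obtain ⟨k, rfl⟩ := Nat.exists_eq_add_of_le hn
    rw [add_comm, pow_add, Module.End.mul_apply, hhmem, map_zero]
  have hne : ∀ k < h, (T ^ k) x ≠ 0 := fun k hk => Nat.notMem_of_lt_sInf hk
  have hvk : ∀ k < h, val T ((T ^ k) x) = m + k := hc
  have hpos : 0 < h := by
    rcases Nat.eq_zero_or_pos h with h0 | h0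
    · exfalso; apply hx; have := hhmem; rwa [h0, pow_zero, Module.End.one_apply] at this
    · exact h0
  -- the splitting of aeval T P
  have hsplit : ∀ z : V, (aeval T) P z = (aeval T) P.divX (T z) + c • z := by
    intro z
    conv_lhs => rw [← Polynomial.divX_mul_X_add P]
    rw [map_add, map_mul, aeval_X, aeval_C, coeff_zero_eq_eval_zero]
    simp only [LinearMap.add_apply, Module.End.mul_apply, Module.algebraMap_end_apply, ← hcdef]
  have hop : ∀ n : ℕ, (T ^ n) y = (aeval T) P.divX ((T ^ (n + 1)) x) + c • (T ^ n) x := by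
    intro n
    have hcomm : (T ^ n) y = (aeval T) P ((T ^ n) x) := by
      rw [hy, ← Module.End.mul_apply, ← aeval_comm_pow, Module.End.mul_apply]
    rw [hcomm, hsplit, pow_succ', Module.End.mul_apply]
  have hA : ∀ k < h, (aeval T) P.divX ((T ^ (k + 1)) x) ∈ LinearMap.range (T ^ (m + k + 1)) := by
    intro k hk
    rcases eq_or_lt_of_le (Nat.succ_le_of_lt hk) with heq | hlt
    · rw [hh0 _ heq.ge, map_zero]; exact Submodule.zero_mem _
    · have hlt' : k + 1 < h := by omega
      have h1 : (T ^ (k + 1)) x ∈ LinearMap.range (T ^ (m + k + 1)) := by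
        have := val_mem T ⟨N, hN⟩ (hne _ hlt')
        rwa [hvk _ hlt', ← add_assoc] at this
      exact aeval_mem_range T _ h1
  have hxk : ∀ k < h, (T ^ k) x ∈ LinearMap.range (T ^ (m + k)) := by
    intro k hk
    have := val_mem T ⟨N, hN⟩ (hne _ hk)
    rwa [hvk _ hk] at this
  -- T^k x is NOT in range T^(m+k+1)
  have hxk' : ∀ k < h, (T ^ k) x ∉ LinearMap.range (T ^ (m + k + 1)) := by
    intro k hk hmem
    have := le_val T ⟨N, hN⟩ (hne _ hk) hmem
    rw [hvk _ hk] at this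
    omega
  have hyne : ∀ k < h, (T ^ k) y ≠ 0 := by
    intro k hk h0
    apply hxk' k hk
    have : c • (T ^ k) x = -((aeval T) P.divX ((T ^ (k + 1)) x)) := by
      have h1 := hop k
      rw [h0] at h1
      exact eq_neg_of_add_eq_zero_right h1.symm
    have hmem : c • (T ^ k) x ∈ LinearMap.range (T ^ (m + k + 1)) := by
      rw [this]; exact Submodule.neg_mem _ (hA k hk)
    have := Submodule.smul_mem _ c⁻¹ hmem
    rwa [smul_smul, inv_mul_cancel₀ hP, one_smul] at this
  have hvaly : ∀ k < h, val T ((T ^ k) y) = m + k := by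
    intro k hk
    refine le_antisymm ?_ ?_
    · by_contra hgt
      push_neg at hgt
      apply hxk' k hk
      have hmemy : (T ^ k) y ∈ LinearMap.range (T ^ (m + k + 1)) :=
        range_pow_le T hgt (val_mem T ⟨N, hN⟩ (hyne _ hk))
      have : c • (T ^ k) x = (T ^ k) y - (aeval T) P.divX ((T ^ (k + 1)) x) := by
        rw [hop k]; abel
      have hmem : c • (T ^ k) x ∈ LinearMap.range (T ^ (m + k + 1)) := by
        rw [this]; exact Submodule.sub_mem _ hmemy (hA k hk)
      have := Submodule.smul_mem _ c⁻¹ hmem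
      rwa [smul_smul, inv_mul_cancel₀ hP, one_smul] at this
    · apply le_val T ⟨N, hN⟩ (hyne _ hk)
      rw [hop k]
      exact Submodule.add_mem _ (range_pow_le T (Nat.le_succ _) (hA k hk))
        (Submodule.smul_mem _ c (hxk k hk))
  have hhy : ht T y = h := by
    have hTh : (T ^ h) y = 0 := by
      rw [hop h, hhmem, hh0 _ (Nat.le_succ h), map_zero, smul_zero, add_zero]
    refine le_antisymm (Nat.sInf_le hTh) ?_
    by_contra hlt
    push_neg at hlt
    have hmem : ht T y ∈ {n : ℕ | (T ^ n) y = 0} := by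
      rw [ht]; exact Nat.sInf_mem ⟨h, hTh⟩
    exact hyne _ hlt hmem
  have hvy : val T y = m := by
    have := hvaly 0 hpos
    rwa [pow_zero, Module.End.one_apply, add_zero] at this
  intro k hk
  rw [hhy] at hk
  rw [hvaly k hk, hvy]

theorem stmt6 [FiniteDimensional ℂ V] (T : V →ₗ[ℂ] V) (hT : IsNilpotent T)
    (x : V) (hx : x ≠ 0) (P : Polynomial ℂ) (hP : P.eval 0 ≠ 0) :
    TConsistent T x ↔ TConsistent T ((Polynomial.aeval T P) x) := by
  obtain ⟨R, hR0, hRP⟩ := exists_inv T hT P hP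
  have hRy : (aeval T) R ((aeval T) P x) = x := by
    rw [← Module.End.mul_apply, hRP, Module.End.one_apply]
  constructor
  · exact fun h => tcons_aeval T hT x hx P hP h
  · intro h
    have hy : (aeval T) P x ≠ 0 := by
      intro h0; apply hx; rw [← hRy, h0, map_zero]
    have := tcons_aeval T hT _ hy R hR0 h
    rwa [hRy] at this
end

section
/- Let V be a finite-dimensional complex vector space, T nilpotent, and V = U₁ ⊕ U₂ a direct sum decomposition into T-invariant subspaces. Then for any nonzero x₁ ∈ U₁ and x₂ ∈ U₂, v(x₁ + x₂) = min(v_{U₁}(x₁), v_{U₂}(x₂)), where v_{U_i} denotes the value computed in U_i. -/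
open Polynomial

variable {V : Type*} [AddCommGroup V] [Module ℂ V]

lemma pow_mem_aux (T : V →ₗ[ℂ] V) (U : Submodule ℂ V) (h : ∀ x ∈ U, T x ∈ U)
    (k : ℕ) {u : V} (hu : u ∈ U) : (T ^ k) u ∈ U := by
  induction k with
  | zero => simpa using hu
  | succ n ih =>
      rw [pow_succ']
      exact h _ ih

lemma dc_aux (T : V →ₗ[ℂ] V) (U : Submodule ℂ V) (h : ∀ x ∈ U, T x ∈ U)
    {m n : ℕ} (hmn : m ≤ n) {x : V} (hx : x ∈ Submodule.map (T ^ n) U) :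
    x ∈ Submodule.map (T ^ m) U := by
  obtain ⟨u, hu, rfl⟩ := hx
  refine ⟨(T ^ (n - m)) u, pow_mem_aux T U h _ hu, ?_⟩
  rw [← Module.End.mul_apply, ← pow_add, add_comm, Nat.sub_add_cancel hmn]

lemma bdd_aux (T : V →ₗ[ℂ] V) (U : Submodule ℂ V) {N : ℕ} (hN : T ^ N = 0)
    {x : V} (hx : x ≠ 0) : {n : ℕ | x ∈ Submodule.map (T ^ n) U} ⊆ Set.Iio N := by
  intro n hn
  by_contra hcon
  simp only [Set.mem_Iio, not_lt] at hcon
  obtain ⟨u, _, rfl⟩ := hn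
  apply hx
  have : T ^ n = 0 := by
    have : T ^ n = T ^ N * T ^ (n - N) := by
      rw [← pow_add, Nat.add_sub_cancel' (by simpa using hcon)]
    rw [this, hN, zero_mul]
  simp [this]

theorem stmt7 [FiniteDimensional ℂ V] (T : V →ₗ[ℂ] V) (hT : IsNilpotent T)
    (U₁ U₂ : Submodule ℂ V) (h1 : ∀ x ∈ U₁, T x ∈ U₁) (h2 : ∀ x ∈ U₂, T x ∈ U₂)
    (hc : IsCompl U₁ U₂) (x₁ x₂ : V) (hx₁ : x₁ ∈ U₁) (hx₂ : x₂ ∈ U₂)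
    (h₁ : x₁ ≠ 0) (h₂ : x₂ ≠ 0) :
    val T (x₁ + x₂) = min (valU T U₁ x₁) (valU T U₂ x₂) := by
  obtain ⟨N, hN⟩ := hT
  set S : Set ℕ := {n | x₁ + x₂ ∈ LinearMap.range (T ^ n)} with hS
  set S₁ : Set ℕ := {n | x₁ ∈ Submodule.map (T ^ n) U₁} with hS₁
  set S₂ : Set ℕ := {n | x₂ ∈ Submodule.map (T ^ n) U₂} with hS₂
  have key : ∀ n, n ∈ S ↔ n ∈ S₁ ∧ n ∈ S₂ := by
    intro n
    constructor
    · rintro ⟨v, hv⟩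
      have hvtop : v ∈ U₁ ⊔ U₂ := by rw [hc.sup_eq_top]; trivial
      obtain ⟨y, hy, z, hz, rfl⟩ := Submodule.mem_sup.mp hvtop
      have hy' : (T ^ n) y ∈ U₁ := pow_mem_aux T U₁ h1 n hy
      have hz' : (T ^ n) z ∈ U₂ := pow_mem_aux T U₂ h2 n hz
      have hsum : x₁ + x₂ = (T ^ n) y + (T ^ n) z := by rw [← map_add]; exact hv.symm
      have hd : x₁ - (T ^ n) y = (T ^ n) z - x₂ := by
        have := hsum; abel_nf; linear_combination (norm := abel) this
      have hmem1 : x₁ - (T ^ n) y ∈ U₁ := U₁.sub_mem hx₁ hy'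
      have hmem2 : x₁ - (T ^ n) y ∈ U₂ := hd ▸ U₂.sub_mem hz' hx₂
      have hbot : x₁ - (T ^ n) y = 0 := by
        have := hc.inf_eq_bot
        have : x₁ - (T ^ n) y ∈ U₁ ⊓ U₂ := ⟨hmem1, hmem2⟩
        rwa [hc.inf_eq_bot, Submodule.mem_bot] at this
      have hx1eq : x₁ = (T ^ n) y := by
        have := sub_eq_zero.mp hbot; exact this
      have hx2eq : x₂ = (T ^ n) z := by
        have : x₂ = x₁ + x₂ - x₁ := by abel
        rw [this, hsum, hx1eq]; abel
      exact ⟨⟨y, hy, hx1eq.symm⟩, ⟨z, hz, hx2eq.symm⟩⟩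
    · rintro ⟨⟨u, _, hu⟩, ⟨w, _, hw⟩⟩
      exact ⟨u + w, by rw [map_add, hu, hw]⟩
  have hne1 : S₁.Nonempty := ⟨0, by simp [hS₁]; exact hx₁⟩
  have hne2 : S₂.Nonempty := ⟨0, by simp [hS₂]; exact hx₂⟩
  have hbdd1 : BddAbove S₁ := ⟨N, fun n hn => le_of_lt (bdd_aux T U₁ hN h₁ hn)⟩
  have hbdd2 : BddAbove S₂ := ⟨N, fun n hn => le_of_lt (bdd_aux T U₂ hN h₂ hn)⟩
  have hm1 : sSup S₁ ∈ S₁ := Nat.sSup_mem hne1 hbdd1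
  have hm2 : sSup S₂ ∈ S₂ := Nat.sSup_mem hne2 hbdd2
  set m := min (sSup S₁) (sSup S₂) with hm
  have hmS : m ∈ S := by
    rw [key]
    exact ⟨dc_aux T U₁ h1 (min_le_left _ _) hm1, dc_aux T U₂ h2 (min_le_right _ _) hm2⟩
  have hub : ∀ n ∈ S, n ≤ m := by
    intro n hn
    rw [key] at hn
    exact le_min (le_csSup hbdd1 hn.1) (le_csSup hbdd2 hn.2)
  have : sSup S = m := le_antisymm (csSup_le ⟨m, hmS⟩ hub) (le_csSup ⟨m, hub⟩ hmS)
  exact this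
end

section
/- Let V be a finite-dimensional complex vector space, T nilpotent, and x ∈ V nonzero with gap sequence gs(x) = {k_1 < ... < k_r} and value sequence vs(x) = {v_1 < ... < v_r} where v_i = v(T^{k_i} x). Then there exist T-consistent vectors a_1, ..., a_r ∈ V such that T^{v_i} a_i ∈ ker(T) for each i and x = T^{v_1 - k_1} a_1 + ... + T^{v_r - k_r} a_r. -/
open Polynomial

variable {V : Type*} [AddCommGroup V] [Module ℂ V]

namespace Aux

variable (T : V →ₗ[ℂ] V)

lemma pow_pow_apply (a b : ℕ) (x : V) : (T ^ a) ((T ^ b) x) = (T ^ (a + b)) x := by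
  rw [← Module.End.mul_apply, ← pow_add]

lemma range_pow_antitone {m n : ℕ} (h : m ≤ n) :
    LinearMap.range (T ^ n) ≤ LinearMap.range (T ^ m) := by
  rw [show n = m + (n - m) by omega, pow_add, Module.End.mul_eq_comp]
  exact LinearMap.range_comp_le_range _ _

lemma mem_range_pow_apply {x : V} {n : ℕ} (j : ℕ) (h : x ∈ LinearMap.range (T ^ n)) :
    (T ^ j) x ∈ LinearMap.range (T ^ (n + j)) := by
  obtain ⟨w, hw⟩ := h
  exact ⟨w, by rw [show n + j = j + n by omega, ← pow_pow_apply, hw]⟩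

variable (hT : IsNilpotent T)
include hT

lemma val_bdd {x : V} (hx : x ≠ 0) : BddAbove {n : ℕ | x ∈ LinearMap.range (T ^ n)} := by
  obtain ⟨N, hN⟩ := hT
  refine ⟨N, fun n hn => ?_⟩
  by_contra hc
  push_neg at hc
  have h0 : (T ^ n) = 0 := pow_eq_zero_of_le hc.le hN
  obtain ⟨w, hw⟩ := hn
  rw [h0] at hw
  exact hx (by simpa using hw.symm)

lemma mem_range_val {x : V} (hx : x ≠ 0) : x ∈ LinearMap.range (T ^ val T x) := by
  have h0 : (0 : ℕ) ∈ {n : ℕ | x ∈ LinearMap.range (T ^ n)} := ⟨x, by simp⟩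
  exact Nat.sSup_mem ⟨0, h0⟩ (val_bdd T hT hx)

lemma le_val {x : V} (hx : x ≠ 0) {n : ℕ} (h : x ∈ LinearMap.range (T ^ n)) :
    n ≤ val T x :=
  le_csSup (val_bdd T hT hx) h

lemma notMem_val_succ {x : V} (hx : x ≠ 0) :
    x ∉ LinearMap.range (T ^ (val T x + 1)) := by
  intro h
  have := le_val T hT hx h
  omega

lemma val_le_of_notMem {x : V} (hx : x ≠ 0) {m : ℕ}
    (h : x ∉ LinearMap.range (T ^ (m + 1))) : val T x ≤ m := by
  by_contra hc
  push_neg at hc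
  exact h (range_pow_antitone T hc (mem_range_val T hT hx))

lemma val_eq_of {z : V} (hz : z ≠ 0) {m : ℕ} (h1 : z ∈ LinearMap.range (T ^ m))
    (h2 : z ∉ LinearMap.range (T ^ (m + 1))) : val T z = m :=
  le_antisymm (val_le_of_notMem T hT hz h2) (le_val T hT hz h1)

lemma pow_ht_apply (x : V) : (T ^ ht T x) x = 0 := by
  obtain ⟨N, hN⟩ := hT
  have hN0 : N ∈ {n : ℕ | (T ^ n) x = 0} := by
    show (T ^ N) x = 0
    rw [hN, LinearMap.zero_apply]
  exact Nat.sInf_mem ⟨N, hN0⟩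

omit hT

lemma ht_le {x : V} {m : ℕ} (h : (T ^ m) x = 0) : ht T x ≤ m := Nat.sInf_le h

lemma apply_eq_zero_of_le {x : V} {m n : ℕ} (hmn : m ≤ n) (h : (T ^ m) x = 0) :
    (T ^ n) x = 0 := by
  rw [show n = (n - m) + m by omega, ← pow_pow_apply, h, map_zero]

lemma ne_zero_of_pow_ne_zero' {x : V} {m j : ℕ} (h : (T ^ m) x ≠ 0) (hj : j ≤ m) :
    (T ^ j) x ≠ 0 := by
  intro hc
  exact h (apply_eq_zero_of_le T hj hc)

include hT

lemma apply_eq_zero_of_ht_le {x : V} {m : ℕ} (h : ht T x ≤ m) : (T ^ m) x = 0 :=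
  apply_eq_zero_of_le T h (pow_ht_apply T hT x)

lemma pow_ne_zero_iff_lt_ht {x : V} {m : ℕ} : (T ^ m) x ≠ 0 ↔ m < ht T x := by
  constructor
  · intro h
    by_contra hc
    exact h (apply_eq_zero_of_ht_le T hT (by omega))
  · intro h hc
    have := ht_le T hc
    omega

lemma val_step {x : V} {m : ℕ} (h : (T ^ (m + 1)) x ≠ 0) :
    val T ((T ^ m) x) + 1 ≤ val T ((T ^ (m + 1)) x) := by
  have hm : (T ^ m) x ≠ 0 := ne_zero_of_pow_ne_zero' T (m := m + 1) h (by omega)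
  have hmem := mem_range_pow_apply T 1 (mem_range_val T hT hm)
  rw [pow_pow_apply] at hmem
  rw [show 1 + m = m + 1 by omega] at hmem
  have := le_val T hT h hmem
  omega

section Head

lemma head (x y : V) (hx : x ≠ 0) (K : ℕ) (hKh : K < ht T x)
    (hcons : ∀ j ≤ K, val T ((T ^ j) x) = val T x + j)
    (hP1 : (T ^ (K + 1)) x = (T ^ (K + 1)) y)
    (hP2 : ∀ j ≤ K, (T ^ j) y ∈ LinearMap.range (T ^ (val T x + j + 1))) :
    ∃ a₁ : V, TConsistent T a₁ ∧ (T ^ (val T x + K + 1)) a₁ = 0 ∧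
      (T ^ (val T x)) a₁ = x - y := by
  set v := val T x with hv
  have zfacts : ∀ j ≤ K, (T ^ j) (x - y) ≠ 0 ∧
      (T ^ j) (x - y) ∈ LinearMap.range (T ^ (v + j)) ∧
      (T ^ j) (x - y) ∉ LinearMap.range (T ^ (v + j + 1)) := by
    intro j hj
    have hxj : (T ^ j) x ≠ 0 := (pow_ne_zero_iff_lt_ht T hT).mpr (by omega)
    have hvalj : val T ((T ^ j) x) = v + j := hcons j hj
    have hxmem : (T ^ j) x ∈ LinearMap.range (T ^ (v + j)) := by
      rw [← hvalj]; exact mem_range_val T hT hxj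
    have hxnot : (T ^ j) x ∉ LinearMap.range (T ^ (v + j + 1)) := by
      rw [← hvalj]
      exact notMem_val_succ T hT hxj
    have hymem := hP2 j hj
    rw [map_sub]
    refine ⟨?_, ?_, ?_⟩
    · intro hc
      rw [sub_eq_zero] at hc
      rw [← hc] at hymem
      exact hxnot hymem
    · exact Submodule.sub_mem _ hxmem (range_pow_antitone T (by omega) hymem)
    · intro hc
      have hadd := Submodule.add_mem _ hc hymem
      rw [sub_add_cancel] at hadd
      exact hxnot hadd
  have hz0 : x - y ≠ 0 := by
    have := (zfacts 0 (by omega)).1; simpa using this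
  have hzmem : x - y ∈ LinearMap.range (T ^ v) := by
    have := (zfacts 0 (by omega)).2.1; simpa using this
  obtain ⟨a₁, ha₁⟩ := hzmem
  have hTKz : (T ^ (K + 1)) (x - y) = 0 := by rw [map_sub, hP1, sub_self]
  have key : ∀ i, (T ^ (v + i)) a₁ = (T ^ i) (x - y) := by
    intro i
    rw [← ha₁, pow_pow_apply, add_comm i v]
  have htop0 : (T ^ (v + K + 1)) a₁ = 0 := by
    rw [show v + K + 1 = v + (K + 1) by omega, key, hTKz]
  have htopne : (T ^ (v + K)) a₁ ≠ 0 := by rw [key]; exact (zfacts K le_rfl).1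
  have hhta : ht T a₁ = v + K + 1 := by
    have h1 : ht T a₁ ≤ v + K + 1 := ht_le T htop0
    have h2 : ¬ (ht T a₁ ≤ v + K) := fun hc => htopne (apply_eq_zero_of_ht_le T hT hc)
    omega
  have valj : ∀ j ≤ v + K, val T ((T ^ j) a₁) = j := by
    intro j hj
    rcases le_or_gt j v with hc | hc
    · have hne : (T ^ j) a₁ ≠ 0 := ne_zero_of_pow_ne_zero' T htopne (by omega)
      refine val_eq_of T hT hne ⟨a₁, rfl⟩ ?_
      intro hmem
      have h3 := mem_range_pow_apply T (v - j) hmem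
      rw [pow_pow_apply, show v - j + j = v by omega, ha₁,
        show j + 1 + (v - j) = v + 1 by omega] at h3
      refine ((zfacts 0 (by omega)).2.2) ?_
      simpa using h3
    · have e : (T ^ j) a₁ = (T ^ (j - v)) (x - y) := by
        rw [← key (j - v), show v + (j - v) = j by omega]
      obtain ⟨hne, hmem, hnot⟩ := zfacts (j - v) (by omega)
      rw [show v + (j - v) = j by omega] at hmem hnot
      rw [e]
      exact val_eq_of T hT hne hmem hnot
  have hva : val T a₁ = 0 := by
    have := valj 0 (by omega); simpa using this
  refine ⟨a₁, ?_, htop0, ha₁⟩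
  intro j hj
  rw [hhta] at hj
  rw [valj j (by omega), hva, zero_add]

end Head

section Main

lemma main_ind :
    ∀ r : ℕ, ∀ x : V, x ≠ 0 → ∀ k : Fin r → ℕ, StrictMono k → gs T x = Set.range k →
    ∃ a : Fin r → V, (∀ i, TConsistent T (a i)) ∧
      (∀ i, (T ^ (val T ((T ^ (k i)) x))) (a i) ∈ LinearMap.ker T) ∧
      x = ∑ i, (T ^ (val T ((T ^ (k i)) x) - k i)) (a i) := by
  intro r
  induction r with
  | zero =>
    intro x hx k hk hgs
    have hmem : ht T x - 1 ∈ gs T x := by simp [gs]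
    rw [hgs] at hmem
    obtain ⟨i, -⟩ := hmem
    exact i.elim0
  | succ r IH =>
    intro x hx k hk hgs
    have hh1 : 1 ≤ ht T x := by
      have h0 : (T ^ 0) x ≠ 0 := by simpa using hx
      have := (pow_ne_zero_iff_lt_ht T hT).mp h0
      omega
    have hki_le : ∀ i, k i ≤ ht T x - 1 := by
      intro i
      have hmem : k i ∈ gs T x := by rw [hgs]; exact Set.mem_range_self i
      simp only [gs, Set.mem_union, Set.mem_setOf_eq, Set.mem_singleton_iff] at hmem
      rcases hmem with ⟨hne, -⟩ | hmem
      · have := (pow_ne_zero_iff_lt_ht T hT).mp hne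
        omega
      · omega
    have htop : ∃ i, k i = ht T x - 1 := by
      have hmem : ht T x - 1 ∈ gs T x := by simp [gs]
      rw [hgs] at hmem
      exact hmem
    have hnogap : ∀ j, j < k 0 → j ∉ gs T x := by
      intro j hj hmem
      rw [hgs] at hmem
      obtain ⟨i, rfl⟩ := hmem
      have : k 0 ≤ k i := hk.monotone (Fin.zero_le i)
      omega
    have hcons : ∀ j, j ≤ k 0 → val T ((T ^ j) x) = val T x + j := by
      intro j hj
      induction j with
      | zero => simp
      | succ n IHn =>
        have hn := IHn (by omega)
        have hne : (T ^ (n + 1)) x ≠ 0 := by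
          rw [pow_ne_zero_iff_lt_ht T hT]
          have := hki_le 0
          omega
        have hub : ¬ (val T ((T ^ (n + 1)) x) > val T ((T ^ n) x) + 1) := by
          intro hgt
          refine hnogap n (by omega) ?_
          simp only [gs, Set.mem_union, Set.mem_setOf_eq, Set.mem_singleton_iff]
          exact Or.inl ⟨hne, hgt⟩
        have hlb := val_step T hT hne
        omega
    by_cases hK : k 0 = ht T x - 1
    · -- base case: single gap
      have hr0 : r = 0 := by
        by_contra hr
        have h1r : (0 : Fin (r + 1)) < ⟨1, by omega⟩ := by
          rw [Fin.lt_def]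
          simp
        have h2 := hk h1r
        have h3 := hki_le ⟨1, by omega⟩
        omega
      subst hr0
      obtain ⟨a₁, hc, hker, hsum⟩ := head T hT x 0 hx (k 0) (by omega)
        (fun j hj => hcons j hj)
        (by rw [map_zero]
            exact apply_eq_zero_of_ht_le T hT (by omega))
        (fun j hj => by rw [map_zero]; exact Submodule.zero_mem _)
      refine ⟨fun _ => a₁, fun i => hc, fun i => ?_, ?_⟩
      · have hi : i = 0 := Fin.fin_one_eq_zero i
        subst hi
        rw [LinearMap.mem_ker, hcons (k 0) le_rfl, ← Module.End.mul_apply, ← pow_succ']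
        exact hker
      · rw [Fin.sum_univ_one, hcons (k 0) le_rfl,
          show val T x + k 0 - k 0 = val T x by omega, hsum, sub_zero]
    · -- inductive case
      have hK0 : k 0 < ht T x - 1 := lt_of_le_of_ne (hki_le 0) hK
      have hKgap : (T ^ (k 0 + 1)) x ≠ 0 ∧
          val T ((T ^ (k 0 + 1)) x) > val T ((T ^ (k 0)) x) + 1 := by
        have hmem : k 0 ∈ gs T x := by rw [hgs]; exact Set.mem_range_self 0
        simp only [gs, Set.mem_union, Set.mem_setOf_eq, Set.mem_singleton_iff] at hmem
        rcases hmem with hmem | hmem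
        · exact hmem
        · exact absurd hmem hK
      have hu0 : (T ^ (k 0 + 1)) x ≠ 0 := hKgap.1
      have hupow : ∀ m, (T ^ m) ((T ^ (k 0 + 1)) x) = (T ^ (m + (k 0 + 1))) x :=
        fun m => pow_pow_apply T m (k 0 + 1) x
      have hhtu : ht T ((T ^ (k 0 + 1)) x) = ht T x - (k 0 + 1) := by
        have h1 : ht T ((T ^ (k 0 + 1)) x) ≤ ht T x - (k 0 + 1) := by
          apply ht_le
          rw [hupow, show ht T x - (k 0 + 1) + (k 0 + 1) = ht T x by omega]
          exact apply_eq_zero_of_ht_le T hT le_rfl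
        have h2 : (T ^ (ht T ((T ^ (k 0 + 1)) x))) ((T ^ (k 0 + 1)) x) = 0 := pow_ht_apply T hT _
        rw [hupow] at h2
        have h3 := ht_le T h2
        omega
      have hksucc_gt : ∀ j : Fin r, k 0 + 1 ≤ k j.succ := by
        intro j
        have : k 0 < k j.succ := hk (Fin.succ_pos j)
        omega
      have hk'mono : StrictMono (fun j : Fin r => k j.succ - (k 0 + 1)) := by
        intro i j hij
        have h1 := hksucc_gt i
        have h2 := hk (show i.succ < j.succ from Fin.succ_lt_succ_iff.mpr hij)
        simp only
        omega
      have hgs' : gs T ((T ^ (k 0 + 1)) x) = Set.range (fun j : Fin r => k j.succ - (k 0 + 1)) := by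
        ext c
        simp only [gs, Set.mem_union, Set.mem_setOf_eq, Set.mem_singleton_iff, Set.mem_range]
        constructor
        · intro hmem
          rcases hmem with ⟨hc1, hc2⟩ | hmem
          · rw [hupow] at hc1
            rw [hupow, hupow] at hc2
            have hmemx : c + (k 0 + 1) ∈ gs T x := by
              simp only [gs, Set.mem_union, Set.mem_setOf_eq, Set.mem_singleton_iff]
              refine Or.inl ⟨?_, ?_⟩
              · rw [show c + (k 0 + 1) + 1 = c + 1 + (k 0 + 1) by omega]
                exact hc1
              · rw [show c + (k 0 + 1) + 1 = c + 1 + (k 0 + 1) by omega]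
                exact hc2
            rw [hgs] at hmemx
            obtain ⟨i, hi⟩ := hmemx
            have hi0 : i ≠ 0 := by
              intro h0
              rw [h0] at hi
              omega
            obtain ⟨j, hj⟩ := Fin.exists_succ_eq.mpr hi0
            refine ⟨j, ?_⟩
            rw [hj, hi]
            omega
          · obtain ⟨i, hi⟩ := htop
            have hi0 : i ≠ 0 := by
              intro h0
              rw [h0] at hi
              exact hK hi
            obtain ⟨j, hj⟩ := Fin.exists_succ_eq.mpr hi0
            refine ⟨j, ?_⟩
            rw [hj, hi, hmem, hhtu]
            omega
        · rintro ⟨j, hj⟩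
          have hjmem : k j.succ ∈ gs T x := by rw [hgs]; exact Set.mem_range_self _
          simp only [gs, Set.mem_union, Set.mem_setOf_eq, Set.mem_singleton_iff] at hjmem
          have hge := hksucc_gt j
          rcases hjmem with ⟨hc1, hc2⟩ | hjm
          · refine Or.inl ⟨?_, ?_⟩
            · rw [hupow, show c + 1 + (k 0 + 1) = k j.succ + 1 by omega]
              exact hc1
            · rw [hupow, hupow, show c + 1 + (k 0 + 1) = k j.succ + 1 by omega,
                show c + (k 0 + 1) = k j.succ by omega]
              exact hc2
          · refine Or.inr ?_
            rw [hhtu]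
            omega
      obtain ⟨a', ha'cons, ha'ker, ha'sum⟩ := IH _ hu0 _ hk'mono hgs'
      have hval' : ∀ j : Fin r, (T ^ (k j.succ - (k 0 + 1))) ((T ^ (k 0 + 1)) x) = (T ^ (k j.succ)) x := by
        intro j
        rw [hupow, show k j.succ - (k 0 + 1) + (k 0 + 1) = k j.succ from by
          have := hksucc_gt j; omega]
      have hlow : ∀ c, k 0 < c → c < ht T x → val T x + c + 1 ≤ val T ((T ^ c) x) := by
        intro c
        induction c with
        | zero => omega
        | succ n IHn =>
          intro h1 h2
          have hne : (T ^ (n + 1)) x ≠ 0 := (pow_ne_zero_iff_lt_ht T hT).mpr (by omega)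
          rcases Nat.lt_or_ge (k 0) n with hn | hn
          · have ha := IHn hn (by omega)
            have hb := val_step T hT hne
            omega
          · have hn0 : n = k 0 := by omega
            have h2' := hKgap.2
            have h3 := hcons (k 0) le_rfl
            rw [hn0]
            omega
      have hmlow : ∀ j : Fin r,
          val T x + k j.succ + 1 ≤ val T ((T ^ (k j.succ)) x) := by
        intro j
        exact hlow (k j.succ) (by have := hksucc_gt j; omega)
          (by have := hki_le j.succ; omega)
      obtain ⟨a₁, hc1, hker1, hsum1⟩ := head T hT x
        (∑ j : Fin r, (T ^ (val T ((T ^ (k j.succ)) x) - k j.succ)) (a' j))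
        hx (k 0) (by omega) (fun j hj => hcons j hj)
        (by -- P1
          rw [map_sum]
          rw [ha'sum]
          refine Finset.sum_congr rfl (fun j _ => ?_)
          rw [hval' j, pow_pow_apply]
          have h1 := hmlow j
          have h2 := hksucc_gt j
          rw [show k 0 + 1 + (val T ((T ^ (k j.succ)) x) - k j.succ)
              = val T ((T ^ (k j.succ)) x) - (k j.succ - (k 0 + 1)) by omega])
        (by -- P2
          intro j hj
          rw [map_sum]
          refine Submodule.sum_mem _ (fun c _ => ?_)
          rw [pow_pow_apply]
          refine range_pow_antitone T ?_ ⟨a' c, rfl⟩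
          have h1 := hmlow c
          have h2 := hksucc_gt c
          omega)
      refine ⟨Fin.cases a₁ a', ?_, ?_, ?_⟩
      · intro i
        induction i using Fin.cases with
        | zero => simpa using hc1
        | succ j => simpa using ha'cons j
      · intro i
        induction i using Fin.cases with
        | zero =>
          simp only [Fin.cases_zero]
          rw [LinearMap.mem_ker, hcons (k 0) le_rfl, ← Module.End.mul_apply, ← pow_succ']
          exact hker1
        | succ j =>
          simp only [Fin.cases_succ]
          have := ha'ker j
          rw [hval' j] at this
          exact this
      · rw [Fin.sum_univ_succ]
        simp only [Fin.cases_zero, Fin.cases_succ]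
        have hv' : ∀ j : Fin r, val T ((T ^ (k j.succ - (k 0 + 1))) ((T ^ (k 0 + 1)) x)) =
            val T ((T ^ (k j.succ)) x) := fun j => by rw [hval' j]
        rw [hcons (k 0) le_rfl, show val T x + k 0 - k 0 = val T x by omega, hsum1]
        rw [sub_add_cancel]

end Main
end Aux

theorem stmt14 [FiniteDimensional ℂ V] (T : V →ₗ[ℂ] V) (hT : IsNilpotent T)
    (x : V) (hx : x ≠ 0) (r : ℕ) (k : Fin r → ℕ) (hk : StrictMono k)
    (hgs : gs T x = Set.range k) :
    ∃ a : Fin r → V, (∀ i, TConsistent T (a i)) ∧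
      (∀ i, (T ^ (val T ((T ^ (k i)) x))) (a i) ∈ LinearMap.ker T) ∧
      x = ∑ i, (T ^ (val T ((T ^ (k i)) x) - k i)) (a i) :=
  Aux.main_ind T hT r x hx k hk hgs
end

section
/- Let V be a finite-dimensional complex vector space and T nilpotent of order p. If (V, T, U) is an indecomposable triple with dim(ker(T|_U)) = 2, then ker(T) ∩ T^{p-2}(V) ⊆ U. -/
open Polynomial

variable {V : Type*} [AddCommGroup V] [Module ℂ V]

lemma key_split [FiniteDimensional ℂ V] (T : V →ₗ[ℂ] V)
    (U : Submodule ℂ V) (hU : ∀ u ∈ U, T u ∈ U)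
    (hind : Indecomposable T U) (hUne : U ≠ ⊥)
    (m : ℕ) (x : V) (hx1 : (T ^ (m + 1)) x = 0)
    (htop : ∀ v : V, (T ^ (m + 1)) v ∈ U) :
    (T ^ m) x ∈ U := by
  by_contra hz
  have hUinv : ∀ (k : ℕ) (u : V), u ∈ U → (T ^ k) u ∈ U := by
    intro k
    induction k with
    | zero => intro u hu; simpa using hu
    | succ n ih =>
        intro u hu
        rw [pow_succ, Module.End.mul_apply]
        exact ih _ (hU u hu)
  have hxhigh : ∀ k : ℕ, m < k → (T ^ k) x = 0 := by
    intro k hk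
    obtain ⟨j, rfl⟩ := Nat.exists_eq_add_of_le hk
    rw [add_comm (m + 1) j, pow_add, Module.End.mul_apply, hx1, map_zero]
  have hUhigh : ∀ (k : ℕ) (v : V), m < k → (T ^ k) v ∈ U := by
    intro k v hk
    obtain ⟨j, rfl⟩ := Nat.exists_eq_add_of_le hk
    rw [add_comm (m + 1) j, pow_add, Module.End.mul_apply]
    exact hUinv j _ (htop v)
  -- a functional vanishing on U with f (T^m x) = 1
  have hzq : U.mkQ ((T ^ m) x) ≠ 0 := by
    simpa [Submodule.mkQ_apply, Submodule.Quotient.mk_eq_zero] using hz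
  obtain ⟨φ, hφ⟩ : ∃ φ : Module.Dual ℂ (V ⧸ U), φ (U.mkQ ((T ^ m) x)) ≠ 0 := by
    by_contra h
    push_neg at h
    exact hzq ((Module.forall_dual_apply_eq_zero_iff ℂ _).mp h)
  set f : V →ₗ[ℂ] ℂ := (φ (U.mkQ ((T ^ m) x)))⁻¹ • (φ ∘ₗ U.mkQ) with hf
  have hfz : f ((T ^ m) x) = 1 := by
    simp only [hf, LinearMap.smul_apply, LinearMap.comp_apply, smul_eq_mul]
    exact inv_mul_cancel₀ hφ
  have hfU : ∀ u ∈ U, f u = 0 := by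
    intro u hu
    have h0 : U.mkQ u = 0 := (Submodule.Quotient.mk_eq_zero U).mpr hu
    simp [hf, h0]
  set Φ : V →ₗ[ℂ] (Fin (m + 1) → ℂ) :=
    LinearMap.pi (fun j : Fin (m + 1) => f ∘ₗ (T ^ (j : ℕ))) with hΦ
  set W := LinearMap.ker Φ with hW
  have hmemW : ∀ v : V, v ∈ W ↔ ∀ k : ℕ, k ≤ m → f ((T ^ k) v) = 0 := by
    intro v
    constructor
    · intro hv k hk
      have := congrFun (LinearMap.mem_ker.mp hv) ⟨k, Nat.lt_succ_of_le hk⟩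
      simpa [hΦ, LinearMap.pi_apply] using this
    · intro h
      rw [LinearMap.mem_ker]
      funext j
      simpa [hΦ, LinearMap.pi_apply] using h (j : ℕ) (Nat.lt_succ_iff.mp j.isLt)
  set C := Submodule.span ℂ (Set.range fun k : Fin (m + 1) => (T ^ (k : ℕ)) x) with hC
  -- key coefficient computation
  have hkey : ∀ a : Fin (m + 1) → ℂ,
      (∑ k, a k • (T ^ (k : ℕ)) x) ∈ W → ∀ k, a k = 0 := by
    intro a ha
    have main : ∀ n : ℕ, ∀ k : Fin (m + 1), (k : ℕ) = n → a k = 0 := by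
      intro n
      induction n using Nat.strong_induction_on with
      | _ n ih =>
        intro k hk
        have hnm : n ≤ m := by have := k.isLt; omega
        have e1 : (T ^ (m - n)) (∑ j : Fin (m + 1), a j • (T ^ (j : ℕ)) x)
            = ∑ j : Fin (m + 1), a j • (T ^ (m - n + (j : ℕ))) x := by
          rw [map_sum]
          refine Finset.sum_congr rfl fun j _ => ?_
          rw [map_smul, pow_add, Module.End.mul_apply]
        have e2 : f ((T ^ (m - n)) (∑ j : Fin (m + 1), a j • (T ^ (j : ℕ)) x))
            = ∑ j : Fin (m + 1), a j * f ((T ^ (m - n + (j : ℕ))) x) := by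
          rw [e1, map_sum]
          exact Finset.sum_congr rfl fun j _ => by rw [map_smul, smul_eq_mul]
        have e3 : ∑ j : Fin (m + 1), a j * f ((T ^ (m - n + (j : ℕ))) x) = a k := by
          rw [Finset.sum_eq_single k]
          · have : m - n + (k : ℕ) = m := by omega
            rw [this, hfz, mul_one]
          · intro j _ hj
            rcases lt_trichotomy (j : ℕ) n with h | h | h
            · rw [ih (j : ℕ) (by omega) j rfl, zero_mul]
            · exact absurd (Fin.ext (by omega : (j : ℕ) = (k : ℕ))) hj
            · rw [hxhigh (m - n + (j : ℕ)) (by omega), map_zero, mul_zero]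
          · intro h
            exact absurd (Finset.mem_univ k) h
        have e4 : f ((T ^ (m - n)) (∑ j : Fin (m + 1), a j • (T ^ (j : ℕ)) x)) = 0 :=
          (hmemW _).mp ha (m - n) (by omega)
        rw [e2, e3] at e4
        exact e4
    exact fun k => main (k : ℕ) k rfl
  have hCW : C ⊓ W = ⊥ := by
    rw [eq_bot_iff]
    intro c hc
    obtain ⟨hcC, hcW⟩ := Submodule.mem_inf.mp hc
    obtain ⟨a, rfl⟩ := (Submodule.mem_span_range_iff_exists_fun ℂ).mp hcC
    rw [Submodule.mem_bot]
    exact Finset.sum_eq_zero fun k _ => by rw [hkey a hcW k, zero_smul]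
  have hli : LinearIndependent ℂ (fun k : Fin (m + 1) => (T ^ (k : ℕ)) x) :=
    Fintype.linearIndependent_iff.mpr fun g hg i => hkey g (hg ▸ W.zero_mem) i
  have hdimC : Module.finrank ℂ C = m + 1 := by
    rw [hC, finrank_span_eq_card hli, Fintype.card_fin]
  have hdimW : Module.finrank ℂ V ≤ (m + 1) + Module.finrank ℂ W := by
    have h1 := LinearMap.finrank_range_add_finrank_ker Φ
    rw [← hW] at h1
    have h2 : Module.finrank ℂ (LinearMap.range Φ) ≤ m + 1 := by
      have h3 := Submodule.finrank_le (LinearMap.range Φ)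
      simpa [Module.finrank_pi] using h3
    omega
  have hCWtop : C ⊔ W = ⊤ := by
    apply Submodule.eq_top_of_finrank_eq
    have h3 := Submodule.finrank_sup_add_finrank_inf_eq C W
    rw [hCW, finrank_bot, add_zero] at h3
    have h4 := Submodule.finrank_le (C ⊔ W)
    omega
  have hCinv : ∀ c ∈ C, T c ∈ C := by
    have hmap : C.map T ≤ C := by
      rw [hC, Submodule.map_span]
      apply Submodule.span_le.mpr
      rintro _ ⟨_, ⟨k, rfl⟩, rfl⟩
      by_cases hkm : (k : ℕ) < m
      · apply Submodule.subset_span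
        refine ⟨⟨(k : ℕ) + 1, by omega⟩, ?_⟩
        show (T ^ ((k : ℕ) + 1)) x = T ((T ^ (k : ℕ)) x)
        rw [pow_succ', Module.End.mul_apply]
      · have hkm' : (k : ℕ) = m := by have := k.isLt; omega
        have h0 : T ((T ^ (k : ℕ)) x) = 0 := by
          rw [← Module.End.mul_apply, ← pow_succ', hkm', hx1]
        rw [h0]
        exact Submodule.zero_mem _
    intro c hc
    exact hmap ⟨c, hc, rfl⟩
  have hWinv : ∀ v ∈ W, T v ∈ W := by
    intro v hv
    refine (hmemW _).mpr fun k hk => ?_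
    have h0 : f ((T ^ k) (T v)) = f ((T ^ (k + 1)) v) := by
      rw [pow_succ, Module.End.mul_apply]
    rw [h0]
    rcases lt_or_eq_of_le hk with h | h
    · exact (hmemW v).mp hv (k + 1) (by omega)
    · subst h
      exact hfU _ (htop v)
  have hUW : U ≤ W := fun u hu => (hmemW u).mpr fun k _ => hfU _ (hUinv k u hu)
  have hcompl : IsCompl C W := ⟨disjoint_iff.mpr hCW, codisjoint_iff.mpr hCWtop⟩
  have hsplit : U = (U ⊓ C) ⊔ (U ⊓ W) := by
    have h1 : U ⊓ C = ⊥ := by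
      have h2 : U ⊓ C ≤ C ⊓ W := le_inf inf_le_right (le_trans inf_le_left hUW)
      exact le_bot_iff.mp (hCW ▸ h2)
    have h2 : U ⊓ W = U := inf_eq_left.mpr hUW
    rw [h1, h2, bot_sup_eq]
  rcases hind C W hCinv hWinv hcompl hsplit with h | h
  · have hmem : (T ^ m) x ∈ C :=
      Submodule.subset_span ⟨⟨m, Nat.lt_succ_self m⟩, rfl⟩
    rw [h, Submodule.mem_bot] at hmem
    exact hz (hmem ▸ U.zero_mem)
  · exact hUne (le_bot_iff.mp (h ▸ hUW))

theorem stmt18 [FiniteDimensional ℂ V] (T : V →ₗ[ℂ] V) (p : ℕ)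
    (hp : T ^ p = 0) (hp' : T ^ (p - 1) ≠ 0)
    (U : Submodule ℂ V) (hU : ∀ u ∈ U, T u ∈ U) (hind : Indecomposable T U)
    (hdim : Module.finrank ℂ ↥(LinearMap.ker T ⊓ U) = 2) :
    LinearMap.ker T ⊓ LinearMap.range (T ^ (p - 2)) ≤ U := by
  rcases Nat.eq_zero_or_pos p with rfl | hp0
  · exact absurd hp hp'
  have hUne : U ≠ ⊥ := by
    intro h
    rw [h, inf_bot_eq] at hdim
    simp [finrank_bot] at hdim
  have step1 : ∀ v : V, (T ^ (p - 1)) v ∈ U := by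
    intro v
    have hpe : p - 1 + 1 = p := Nat.succ_pred_eq_of_pos hp0
    refine key_split T U hU hind hUne (p - 1) v ?_ ?_
    · rw [hpe, hp]; rfl
    · intro w; rw [hpe, hp]; exact U.zero_mem
  intro y hy
  obtain ⟨hk, hr⟩ := Submodule.mem_inf.mp hy
  obtain ⟨w, rfl⟩ := hr
  have hx1 : (T ^ (p - 2 + 1)) w = 0 := by
    rw [pow_succ', Module.End.mul_apply]
    exact LinearMap.mem_ker.mp hk
  have htop2 : ∀ v : V, (T ^ (p - 2 + 1)) v ∈ U := by
    intro v
    rcases Nat.lt_or_ge p 2 with h2 | h2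
    · have hp1 : p = 1 := by omega
      subst hp1
      rw [show (1 : ℕ) - 2 + 1 = 1 from rfl, pow_one, ← pow_one T, hp]
      exact U.zero_mem
    · rw [show p - 2 + 1 = p - 1 by omega]
      exact step1 v
  exact key_split T U hU hind hUne (p - 2) w hx1 htop2
end
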